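/- For every integer k ≥ 3, the asymmetric grid instance satisfies E_{A∼p_k}[TSP(A, c_k)] ≤ 5 · k · ln k. -/

import Mathlib

noncomputable section

/-- The cost of a tour given as a cyclic list: the sum of `c` over consecutive pairs
(cyclically). -/
def cycCost {V : Type*} (c : V → V → ℝ) (l : List V) : ℝ :=
  (List.zipWith c l (l.rotate 1)).sum

/-- `l` is a tour on the finite set `A`: a cyclic ordering of `A`, visiting each element
exactly once. -/
def IsTour {V : Type*} [DecidableEq V] (A : Finset V) (l : List V) : Prop :=
  l.Nodup ∧ l.toFinset = A

/-- The expectation of `f` over the random set of active vertices, where each vertex `v`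
is active independently with probability `p v`. -/
def apExpect {V : Type*} [Fintype V] [DecidableEq V] (p : V → ℝ) (f : Finset V → ℝ) : ℝ :=
  ∑ A : Finset V, (∏ v ∈ A, p v) * (∏ v ∈ Aᶜ, (1 - p v)) * f A

/-- The minimum cost of a tour on `A` with respect to `c`. -/
def TSP {V : Type*} [DecidableEq V] (c : V → V → ℝ) (A : Finset V) : ℝ :=
  sInf {x : ℝ | ∃ l : List V, IsTour A l ∧ x = cycCost c l}

/-- The cost function of the asymmetric grid instance on `Fin k × Fin k` (first coordinate:
row, second coordinate: column): the shortest-path metric of the digraph with a unit-cost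
edge from every vertex of column `j` to every vertex of column `j+1` (cyclically). -/
def gridCost (k : ℕ) (u w : Fin k × Fin k) : ℝ :=
  if u = w then 0
  else if u.2 = w.2 then (k : ℝ)
  else (((w.2.val + k - u.2.val) % k : ℕ) : ℝ)

namespace APGrid

abbrev Vk (k : ℕ) := Fin k × Fin k

def colCnt (k : ℕ) (A : Finset (Vk k)) (j : Fin k) : ℕ :=
  (A.filter (fun v => v.2 = j)).card

def Mx (k : ℕ) (A : Finset (Vk k)) : ℕ := Finset.univ.sup (colCnt k A)

def rnk (k : ℕ) (A : Finset (Vk k)) (v : Vk k) : ℕ :=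
  (A.filter (fun u => u.2 = v.2 ∧ u.1 < v.1)).card

def key (k : ℕ) (A : Finset (Vk k)) (v : Vk k) : ℕ := rnk k A v * k + v.2.val

lemma gridCost_nonneg (k : ℕ) (u w : Vk k) : 0 ≤ gridCost k u w := by
  unfold gridCost; split_ifs <;> positivity

lemma gridCost_le (k : ℕ) (hk : 0 < k) (u w : Vk k) : gridCost k u w ≤ k := by
  unfold gridCost; split_ifs
  · positivity
  · exact le_refl _
  · exact_mod_cast (Nat.mod_lt _ hk).le

lemma mem_zipWith {α : Type*} (f : α → α → ℝ) :
    ∀ (l l' : List α) (x : ℝ), x ∈ List.zipWith f l l' → ∃ a ∈ l, ∃ b ∈ l', x = f a b := by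
  intro l
  induction l with
  | nil => simp
  | cons a as ih =>
    intro l' x hx
    cases l' with
    | nil => simp at hx
    | cons b bs =>
      simp only [List.zipWith, List.mem_cons] at hx
      rcases hx with h | h
      · exact ⟨a, by simp, b, by simp, h⟩
      · obtain ⟨u, hu, v, hv, he⟩ := ih bs x h
        exact ⟨u, by simp [hu], v, by simp [hv], he⟩

lemma cycCost_nonneg (k : ℕ) (l : List (Vk k)) : 0 ≤ cycCost (gridCost k) l := by
  apply List.sum_nonneg
  intro x hx
  obtain ⟨a, _, b, _, he⟩ := mem_zipWith (gridCost k) l (l.rotate 1) x hx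
  exact he ▸ gridCost_nonneg k a b

lemma rotate_one {α : Type*} (x : α) (xs : List α) : (x :: xs).rotate 1 = xs ++ [x] := by
  cases xs <;> simp [List.rotate]

lemma edge_le {k : ℕ} (hk : 0 < k) (A : Finset (Vk k)) (u w : Vk k)
    (h : key k A u < key k A w) :
    gridCost k u w ≤ (key k A w : ℝ) - key k A u := by
  have hne : u ≠ w := by rintro rfl; exact lt_irrefl _ h
  have hcu : u.2.val < k := u.2.isLt
  have hcw : w.2.val < k := w.2.isLt
  by_cases hc : u.2 = w.2
  · have hcv : u.2.val = w.2.val := by rw [hc]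
    have hlt : rnk k A u < rnk k A w := by
      have : rnk k A u * k < rnk k A w * k := by unfold key at h; omega
      exact lt_of_mul_lt_mul_right this (Nat.zero_le k)
    have hfin : key k A u + k ≤ key k A w := by
      have h2 : (rnk k A u + 1) * k ≤ rnk k A w * k := Nat.mul_le_mul_right _ hlt
      unfold key; have h3 : (rnk k A u + 1) * k = rnk k A u * k + k := by ring
      omega
    have : ((key k A u : ℝ) + k ≤ key k A w) := by exact_mod_cast hfin
    simp only [gridCost, if_neg hne, if_pos hc]
    linarith
  · have hcv : u.2.val ≠ w.2.val := fun e => hc (Fin.ext e)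
    rcases lt_or_gt_of_ne hcv with hlt | hgt
    · have hmod : (w.2.val + k - u.2.val) % k = w.2.val - u.2.val := by
        have h1 : w.2.val + k - u.2.val = (w.2.val - u.2.val) + k := by omega
        rw [h1, Nat.add_mod_right, Nat.mod_eq_of_lt (by omega)]
      have hru : rnk k A u ≤ rnk k A w := by
        by_contra hx
        push_neg at hx
        have h2 : (rnk k A w + 1) * k ≤ rnk k A u * k := Nat.mul_le_mul_right _ hx
        have h3 : (rnk k A w + 1) * k = rnk k A w * k + k := by ring
        unfold key at h; omega
      have hfin : key k A u + (w.2.val - u.2.val) ≤ key k A w := by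
        have h2 : rnk k A u * k ≤ rnk k A w * k := Nat.mul_le_mul_right _ hru
        unfold key; omega
      have hcast : ((key k A u : ℝ)) + ((w.2.val - u.2.val : ℕ) : ℝ) ≤ key k A w := by
        exact_mod_cast hfin
      simp only [gridCost, if_neg hne, if_neg hc, hmod]
      linarith
    · have hmod : (w.2.val + k - u.2.val) % k = w.2.val + k - u.2.val :=
        Nat.mod_eq_of_lt (by omega)
      have hru : rnk k A u < rnk k A w := by
        by_contra hx
        push_neg at hx
        have h2 : rnk k A w * k ≤ rnk k A u * k := Nat.mul_le_mul_right _ hx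
        unfold key at h; omega
      have hfin : key k A u + (w.2.val + k - u.2.val) ≤ key k A w := by
        have h2 : (rnk k A u + 1) * k ≤ rnk k A w * k := Nat.mul_le_mul_right _ hru
        have h3 : (rnk k A u + 1) * k = rnk k A u * k + k := by ring
        unfold key; omega
      have hcast : ((key k A u : ℝ)) + ((w.2.val + k - u.2.val : ℕ) : ℝ) ≤ key k A w := by
        exact_mod_cast hfin
      simp only [gridCost, if_neg hne, if_neg hc, hmod]
      linarith

lemma rnk_strict {k : ℕ} (A : Finset (Vk k)) (u w : Vk k) (hu : u ∈ A)
    (hc : u.2 = w.2) (h1 : u.1 < w.1) : rnk k A u < rnk k A w := by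
  apply Finset.card_lt_card
  constructor
  · intro x hx
    simp only [Finset.mem_filter] at *
    exact ⟨hx.1, hx.2.1.trans hc, hx.2.2.trans h1⟩
  · intro hsub
    have : u ∈ A.filter (fun x => x.2 = u.2 ∧ x.1 < u.1) := by
      apply hsub; simp only [Finset.mem_filter]; exact ⟨hu, hc, h1⟩
    simp only [Finset.mem_filter] at this
    exact lt_irrefl _ this.2.2

lemma key_inj {k : ℕ} (hk : 0 < k) (A : Finset (Vk k)) (u w : Vk k) (hu : u ∈ A) (hw : w ∈ A)
    (hne : u ≠ w) : key k A u ≠ key k A w := by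
  intro he
  have hcv : u.2.val = w.2.val := by
    have h1 : (rnk k A u * k + u.2.val) % k = (rnk k A w * k + w.2.val) % k := by rw [← key, ← key, he]
    rwa [Nat.add_comm (rnk k A u * k), Nat.add_comm (rnk k A w * k), Nat.add_mul_mod_self_right,
      Nat.add_mul_mod_self_right, Nat.mod_eq_of_lt u.2.isLt, Nat.mod_eq_of_lt w.2.isLt] at h1
  have hc : u.2 = w.2 := Fin.ext hcv
  have hr : rnk k A u = rnk k A w := by
    unfold key at he
    have : rnk k A u * k = rnk k A w * k := by omega
    exact Nat.eq_of_mul_eq_mul_right hk this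
  have h1 : u.1 ≠ w.1 := by
    intro e; exact hne (Prod.ext e hc)
  rcases lt_or_gt_of_ne h1 with hlt | hgt
  · exact absurd hr (Nat.ne_of_lt (rnk_strict A u w hu hc hlt))
  · exact absurd hr.symm (Nat.ne_of_lt (rnk_strict A w u hw hc.symm hgt))

lemma key_succ_le {k : ℕ} (A : Finset (Vk k)) (v : Vk k) (hv : v ∈ A) :
    key k A v + 1 ≤ Mx k A * k := by
  have h1 : rnk k A v + 1 ≤ colCnt k A v.2 := by
    apply Finset.card_lt_card
    constructor
    · intro x hx
      simp only [Finset.mem_filter] at *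
      exact ⟨hx.1, hx.2.1⟩
    · intro hsub
      have : v ∈ A.filter (fun u => u.2 = v.2 ∧ u.1 < v.1) := by
        apply hsub; simp [hv]
      simp only [Finset.mem_filter] at this
      exact lt_irrefl _ this.2.2
  have h2 : colCnt k A v.2 ≤ Mx k A := Finset.le_sup (Finset.mem_univ _)
  have h3 : (rnk k A v + 1) * k ≤ Mx k A * k := Nat.mul_le_mul_right _ (h1.trans h2)
  have h4 : (rnk k A v + 1) * k = rnk k A v * k + k := by ring
  have h5 : v.2.val < k := v.2.isLt
  unfold key; omega

lemma path_bound {V : Type*} (c : V → V → ℝ) (g : V → ℝ) :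
    ∀ (xs : List V) (x₀ x : V), List.Chain' (fun u w => c u w ≤ g w - g u) (x :: xs) →
    (List.zipWith c (x :: xs) (xs ++ [x₀])).sum ≤
      g ((x :: xs).getLast (List.cons_ne_nil x xs)) - g x
        + c ((x :: xs).getLast (List.cons_ne_nil x xs)) x₀ := by
  intro xs
  induction xs with
  | nil =>
    intro x₀ x _
    simp
  | cons y ys ih =>
    intro x₀ x h
    simp only [List.Chain', List.isChain_cons_cons] at h
    have hlast : (x :: y :: ys).getLast (List.cons_ne_nil x (y :: ys))
        = (y :: ys).getLast (List.cons_ne_nil y ys) := List.getLast_cons _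
    have hzip : List.zipWith c (x :: y :: ys) ((y :: ys) ++ [x₀])
        = c x y :: List.zipWith c (y :: ys) (ys ++ [x₀]) := rfl
    rw [hzip, List.sum_cons, hlast]
    have := ih x₀ y h.2
    linarith [h.1]

lemma TSP_le_Mx {k : ℕ} (hk : 0 < k) (A : Finset (Vk k)) :
    TSP (gridCost k) A ≤ (k : ℝ) * (Mx k A + 1) := by
  classical
  set le : Vk k → Vk k → Bool := fun u w => decide (key k A u ≤ key k A w) with hle
  set l := A.toList.mergeSort le with hl
  have hperm : l.Perm A.toList := List.mergeSort_perm A.toList le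
  have hnodup : l.Nodup := hperm.symm.nodup (Finset.nodup_toList A)
  have htf : l.toFinset = A := by
    have h1 : l.toFinset = A.toList.toFinset := List.toFinset_eq_iff_perm_dedup.mpr hperm.dedup
    rwa [Finset.toList_toFinset] at h1
  have hmem : ∀ v ∈ l, v ∈ A := fun v hv => htf ▸ List.mem_toFinset.mpr hv
  have hsorted : List.Pairwise (fun u w => le u w = true) l := by
    apply List.pairwise_mergeSort
    · intro a b c hab hbc
      simp only [hle, decide_eq_true_eq] at *
      omega
    · intro a b
      simp only [hle, Bool.or_eq_true, decide_eq_true_eq]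
      omega
  have hpair : List.Pairwise (fun u w => key k A u < key k A w) l := by
    apply (hsorted.and hnodup).imp_of_mem
    intro a b ha hb hab
    have h1 : key k A a ≤ key k A b := by
      have := hab.1; simp only [hle, decide_eq_true_eq] at this; exact this
    exact lt_of_le_of_ne h1 (key_inj hk A a b (hmem a ha) (hmem b hb) hab.2)
  have hchain : List.Chain' (fun u w => gridCost k u w ≤ (key k A w : ℝ) - key k A u) l :=
    (hpair.imp (fun h => edge_le hk A _ _ h)).isChain
  have hcost : cycCost (gridCost k) l ≤ (k : ℝ) * (Mx k A + 1) := by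
    cases hl' : l with
    | nil =>
      have : cycCost (gridCost k) ([] : List (Vk k)) = 0 := by simp [cycCost]
      rw [this]; positivity
    | cons x xs =>
      rw [hl'] at hchain hmem
      have hbd := path_bound (gridCost k) (fun v => (key k A v : ℝ)) xs x x hchain
      set z := (x :: xs).getLast (List.cons_ne_nil x xs) with hz
      have hzA : z ∈ A := hmem z (List.getLast_mem _)
      have hzk : key k A z + 1 ≤ Mx k A * k := key_succ_le A z hzA
      have hzk' : (key k A z : ℝ) + 1 ≤ (Mx k A : ℝ) * k := by exact_mod_cast hzk
      have hcl : gridCost k z x ≤ (k : ℝ) := gridCost_le k hk z x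
      have hx0 : (0 : ℝ) ≤ key k A x := Nat.cast_nonneg _
      have : cycCost (gridCost k) (x :: xs)
          = (List.zipWith (gridCost k) (x :: xs) (xs ++ [x])).sum := by
        rw [cycCost, rotate_one]
      rw [this]
      calc (List.zipWith (gridCost k) (x :: xs) (xs ++ [x])).sum
          ≤ (key k A z : ℝ) - key k A x + gridCost k z x := hbd
        _ ≤ (k : ℝ) * (Mx k A + 1) := by nlinarith
  have hne : cycCost (gridCost k) l ∈
      {x : ℝ | ∃ l' : List (Vk k), IsTour A l' ∧ x = cycCost (gridCost k) l'} :=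
    ⟨l, ⟨hnodup, htf⟩, rfl⟩
  have hbdd : BddBelow {x : ℝ | ∃ l' : List (Vk k), IsTour A l' ∧ x = cycCost (gridCost k) l'} := by
    refine ⟨0, ?_⟩
    rintro x ⟨l', _, rfl⟩
    exact cycCost_nonneg k l'
  exact (csInf_le hbdd hne).trans hcost

def wgt (k : ℕ) (A : Finset (Vk k)) : ℝ :=
  (∏ _v ∈ A, (1 / (k:ℝ))) * ∏ _v ∈ Aᶜ, (1 - 1 / (k:ℝ))

lemma wgt_nonneg {k : ℕ} (hk : 0 < k) (A : Finset (Vk k)) : 0 ≤ wgt k A := by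
  have h1 : (0:ℝ) ≤ 1 / (k:ℝ) := by positivity
  have h2 : (0:ℝ) ≤ 1 - 1 / (k:ℝ) := by
    have : (1:ℝ) ≤ (k:ℝ) := by exact_mod_cast hk
    have : 1 / (k:ℝ) ≤ 1 := by
      rw [div_le_one (by positivity)]; exact this
    linarith
  exact mul_nonneg (Finset.prod_nonneg fun _ _ => h1) (Finset.prod_nonneg fun _ _ => h2)

lemma sum_pow_powerset {α : Type*} [DecidableEq α] (p q : ℝ) (P : Finset α) :
    ∑ B ∈ P.powerset, p ^ B.card * q ^ (P.card - B.card) = (p + q) ^ P.card := by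
  rw [← Finset.prod_const, Finset.prod_add]
  apply Finset.sum_congr rfl
  intro t ht
  rw [Finset.prod_const, Finset.prod_const, Finset.card_sdiff_of_subset (Finset.mem_powerset.mp ht)]

lemma wgt_eq {k : ℕ} (A : Finset (Vk k)) :
    wgt k A = (1/(k:ℝ)) ^ A.card * (1 - 1/(k:ℝ)) ^ (Aᶜ.card) := by
  simp [wgt, Finset.prod_const]

lemma sum_wgt_superset {k : ℕ} (S : Finset (Vk k)) :
    ∑ A : Finset (Vk k), wgt k A * (if S ⊆ A then (1:ℝ) else 0) = (1/(k:ℝ)) ^ S.card := by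
  classical
  set p : ℝ := 1/(k:ℝ) with hp
  set q : ℝ := 1 - p with hq
  set n := Fintype.card (Vk k)
  have step1 : ∑ A : Finset (Vk k), wgt k A * (if S ⊆ A then (1:ℝ) else 0)
      = ∑ A ∈ Finset.univ.filter (fun A : Finset (Vk k) => S ⊆ A), wgt k A := by
    rw [Finset.sum_filter]
    apply Finset.sum_congr rfl
    intro A _
    by_cases h : S ⊆ A <;> simp [h]
  rw [step1]
  have step2 : ∑ A ∈ Finset.univ.filter (fun A : Finset (Vk k) => S ⊆ A), wgt k A
      = ∑ B ∈ Sᶜ.powerset, p ^ S.card * (p ^ B.card * q ^ (Sᶜ.card - B.card)) := by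
    apply Finset.sum_nbij' (i := fun A => A \ S) (j := fun B => S ∪ B)
    · intro A hA
      simp only [Finset.mem_powerset]
      intro x hx
      simp only [Finset.mem_sdiff] at hx
      simp [Finset.mem_compl, hx.2]
    · intro B hB
      simp only [Finset.mem_filter, Finset.mem_univ, true_and]
      exact Finset.subset_union_left
    · intro A hA
      simp only [Finset.mem_filter, Finset.mem_univ, true_and] at hA
      exact Finset.union_sdiff_of_subset hA
    · intro B hB
      simp only [Finset.mem_powerset] at hB
      apply Finset.union_sdiff_cancel_left
      rw [Finset.disjoint_left]
      intro a haS haB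
      have := hB haB
      simp only [Finset.mem_compl] at this
      exact this haS
    · intro A hA
      simp only [Finset.mem_filter, Finset.mem_univ, true_and] at hA
      rw [wgt_eq]
      have hc1 : A.card ≤ n := Finset.card_le_univ A
      have hc2 : S.card ≤ A.card := Finset.card_le_card hA
      have hsd : (A \ S).card = A.card - S.card := Finset.card_sdiff_of_subset hA
      have hcompl : Aᶜ.card = n - A.card := Finset.card_compl A
      have hScompl : Sᶜ.card = n - S.card := Finset.card_compl S
      rw [hsd, hcompl, hScompl]
      have e1 : A.card = S.card + (A.card - S.card) := by omega
      have e2 : n - S.card - (A.card - S.card) = n - A.card := by omega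
      rw [e2, ← mul_assoc, ← pow_add, ← e1]
  rw [step2, ← Finset.mul_sum, sum_pow_powerset p q Sᶜ]
  have : p + q = 1 := by rw [hq]; ring
  rw [this, one_pow, mul_one]

lemma sum_wgt_one (k : ℕ) : ∑ A : Finset (Vk k), wgt k A = 1 := by
  have := sum_wgt_superset (k := k) ∅
  simp at this
  convert this using 2

lemma prob_le_one {k : ℕ} (hk : 0 < k) (P : Finset (Vk k) → Prop) [DecidablePred P] :
    ∑ A : Finset (Vk k), wgt k A * (if P A then (1:ℝ) else 0) ≤ 1 := by
  calc ∑ A : Finset (Vk k), wgt k A * (if P A then (1:ℝ) else 0)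
      ≤ ∑ A : Finset (Vk k), wgt k A := by
        apply Finset.sum_le_sum
        intro A _
        have h0 := wgt_nonneg hk A
        by_cases h : P A <;> simp [h, h0]
    _ = 1 := sum_wgt_one k

lemma col_card {k : ℕ} (j : Fin k) :
    (Finset.univ.filter (fun v : Vk k => v.2 = j)).card = k := by
  classical
  have h : (Finset.univ.filter (fun v : Vk k => v.2 = j)).card
      = Fintype.card {v : Vk k // v.2 = j} := (Fintype.card_subtype _).symm
  rw [h]
  have e : {v : Vk k // v.2 = j} ≃ Fin k :=
    { toFun := fun s => s.1.1
      invFun := fun i => ⟨(i, j), rfl⟩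
      left_inv := by rintro ⟨⟨a, b⟩, rfl⟩; rfl
      right_inv := fun i => rfl }
  rw [Fintype.card_congr e, Fintype.card_fin]

lemma prob_Mx_ge {k : ℕ} (hk : 0 < k) (t : ℕ) :
    ∑ A : Finset (Vk k), wgt k A * (if t < Mx k A then (1:ℝ) else 0)
      ≤ (k : ℝ) * (k.choose (t+1)) * (1/(k:ℝ)) ^ (t+1) := by
  classical
  have hptw : ∀ A : Finset (Vk k), (if t < Mx k A then (1:ℝ) else 0)
      ≤ ∑ j : Fin k, ∑ S ∈ Finset.powersetCard (t+1)
          (Finset.univ.filter (fun v : Vk k => v.2 = j)), (if S ⊆ A then (1:ℝ) else 0) := by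
    intro A
    by_cases h : t < Mx k A
    · rw [if_pos h]
      obtain ⟨j, -, hj⟩ := Finset.lt_sup_iff.mp h
      obtain ⟨S, hS, hScard⟩ := Finset.exists_subset_card_eq
        (show t + 1 ≤ (A.filter (fun v => v.2 = j)).card from hj)
      have hSA : S ⊆ A := hS.trans (Finset.filter_subset _ _)
      have hSmem : S ∈ Finset.powersetCard (t+1)
          (Finset.univ.filter (fun v : Vk k => v.2 = j)) := by
        rw [Finset.mem_powersetCard]
        refine ⟨?_, hScard⟩
        intro x hx
        have := hS hx
        simp only [Finset.mem_filter] at this ⊢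
        exact ⟨Finset.mem_univ _, this.2⟩
      calc (1:ℝ) = (if S ⊆ A then (1:ℝ) else 0) := by rw [if_pos hSA]
        _ ≤ ∑ S' ∈ Finset.powersetCard (t+1)
              (Finset.univ.filter (fun v : Vk k => v.2 = j)), (if S' ⊆ A then (1:ℝ) else 0) := by
            apply Finset.single_le_sum (fun i _ => by positivity) hSmem
        _ ≤ _ := by
            apply Finset.single_le_sum (fun i _ => ?_) (Finset.mem_univ j)
            apply Finset.sum_nonneg
            intro S' _
            positivity
    · rw [if_neg h]
      apply Finset.sum_nonneg
      intro j _
      apply Finset.sum_nonneg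
      intro S' _
      positivity
  calc ∑ A : Finset (Vk k), wgt k A * (if t < Mx k A then (1:ℝ) else 0)
      ≤ ∑ A : Finset (Vk k), wgt k A * ∑ j : Fin k, ∑ S ∈ Finset.powersetCard (t+1)
          (Finset.univ.filter (fun v : Vk k => v.2 = j)), (if S ⊆ A then (1:ℝ) else 0) := by
        apply Finset.sum_le_sum
        intro A _
        exact mul_le_mul_of_nonneg_left (hptw A) (wgt_nonneg hk A)
    _ = ∑ j : Fin k, ∑ S ∈ Finset.powersetCard (t+1)
          (Finset.univ.filter (fun v : Vk k => v.2 = j)),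
          ∑ A : Finset (Vk k), wgt k A * (if S ⊆ A then (1:ℝ) else 0) := by
        simp_rw [Finset.mul_sum]
        rw [Finset.sum_comm]
        apply Finset.sum_congr rfl
        intro j _
        rw [Finset.sum_comm]
    _ = ∑ j : Fin k, ∑ S ∈ Finset.powersetCard (t+1)
          (Finset.univ.filter (fun v : Vk k => v.2 = j)), (1/(k:ℝ)) ^ (t+1) := by
        apply Finset.sum_congr rfl
        intro j _
        apply Finset.sum_congr rfl
        intro S hS
        rw [sum_wgt_superset S, (Finset.mem_powersetCard.mp hS).2]
    _ = ∑ _j : Fin k, ((k.choose (t+1) : ℝ)) * (1/(k:ℝ)) ^ (t+1) := by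
        apply Finset.sum_congr rfl
        intro j _
        rw [Finset.sum_const, Finset.card_powersetCard, col_card, nsmul_eq_mul]
    _ = (k : ℝ) * (k.choose (t+1)) * (1/(k:ℝ)) ^ (t+1) := by
        rw [Finset.sum_const, Finset.card_univ, Fintype.card_fin, nsmul_eq_mul]
        ring

lemma two_pow_le_fact : ∀ t : ℕ, 2 ^ t ≤ (t+1).factorial := by
  intro t
  induction t with
  | zero => simp
  | succ n ih =>
    have h1 : (n+2).factorial = (n+2) * (n+1).factorial := rfl
    calc 2 ^ (n+1) = 2 * 2 ^ n := by ring
      _ ≤ 2 * (n+1).factorial := by omega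
      _ ≤ (n+2) * (n+1).factorial := Nat.mul_le_mul_right _ (by omega)
      _ = (n+2).factorial := h1.symm

lemma EM_le {k : ℕ} (hk3 : 3 ≤ k) :
    ∑ A : Finset (Vk k), wgt k A * (Mx k A : ℝ) ≤ (Nat.log 2 k : ℝ) + 3 := by
  classical
  have hk : 0 < k := by omega
  have hMxle : ∀ A : Finset (Vk k), Mx k A ≤ k := by
    intro A
    apply Finset.sup_le
    intro j _
    calc colCnt k A j ≤ (Finset.univ.filter (fun v : Vk k => v.2 = j)).card :=
          Finset.card_le_card (Finset.filter_subset_filter _ (Finset.subset_univ A))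
      _ = k := col_card j
  have hpt : ∀ A : Finset (Vk k),
      ((Mx k A : ℝ)) = ∑ t ∈ Finset.range k, (if t < Mx k A then (1:ℝ) else 0) := by
    intro A
    rw [Finset.sum_boole]
    have : Finset.filter (fun t => t < Mx k A) (Finset.range k) = Finset.range (Mx k A) := by
      ext t
      simp only [Finset.mem_filter, Finset.mem_range]
      have := hMxle A
      omega
    rw [this, Finset.card_range]
  have hswap : ∑ A : Finset (Vk k), wgt k A * (Mx k A : ℝ)
      = ∑ t ∈ Finset.range k, ∑ A : Finset (Vk k), wgt k A * (if t < Mx k A then (1:ℝ) else 0) := by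
    simp_rw [hpt, Finset.mul_sum]
    rw [Finset.sum_comm]
  rw [hswap]
  set m := Nat.log 2 k + 1 with hm
  have hmk : m ≤ k := by
    have h1 : Nat.log 2 k ≤ 2 ^ (Nat.log 2 k) := (Nat.lt_two_pow_self).le
    have h2 : 2 ^ (Nat.log 2 k) ≤ k := Nat.pow_log_le_self 2 (by omega)
    have h3 : Nat.log 2 k < 2 ^ (Nat.log 2 k) := Nat.lt_two_pow_self
    omega
  have hbd : ∀ t ∈ Finset.range k,
      ∑ A : Finset (Vk k), wgt k A * (if t < Mx k A then (1:ℝ) else 0)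
        ≤ (if t < m then (1:ℝ) else (k:ℝ) * (1/2) ^ t) := by
    intro t _
    by_cases h : t < m
    · rw [if_pos h]
      exact prob_le_one hk _
    · rw [if_neg h]
      calc ∑ A : Finset (Vk k), wgt k A * (if t < Mx k A then (1:ℝ) else 0)
          ≤ (k : ℝ) * (k.choose (t+1)) * (1/(k:ℝ)) ^ (t+1) := prob_Mx_ge hk t
        _ ≤ (k : ℝ) * ((k:ℝ) ^ (t+1) / (t+1).factorial) * (1/(k:ℝ)) ^ (t+1) := by
            apply mul_le_mul_of_nonneg_right _ (by positivity)
            apply mul_le_mul_of_nonneg_left _ (by positivity)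
            exact Nat.choose_le_pow_div (t+1) k
        _ = (k : ℝ) / (t+1).factorial := by
            have hkne : (k:ℝ) ≠ 0 := by positivity
            field_simp
            rw [← mul_pow, mul_one_div_cancel hkne, one_pow]
        _ ≤ (k : ℝ) * (1/2) ^ t := by
            rw [one_div, inv_pow, ← div_eq_mul_inv]
            apply div_le_div_of_nonneg_left (by positivity) (by positivity)
            exact_mod_cast two_pow_le_fact t
  calc ∑ t ∈ Finset.range k, ∑ A : Finset (Vk k), wgt k A * (if t < Mx k A then (1:ℝ) else 0)
      ≤ ∑ t ∈ Finset.range k, (if t < m then (1:ℝ) else (k:ℝ) * (1/2) ^ t) :=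
        Finset.sum_le_sum hbd
    _ = ∑ t ∈ Finset.range m, (if t < m then (1:ℝ) else (k:ℝ) * (1/2) ^ t)
        + ∑ t ∈ Finset.Ico m k, (if t < m then (1:ℝ) else (k:ℝ) * (1/2) ^ t) :=
        (Finset.sum_range_add_sum_Ico _ hmk).symm
    _ = (m : ℝ) + ∑ t ∈ Finset.Ico m k, (k:ℝ) * (1/2) ^ t := by
        congr 1
        · rw [Finset.sum_congr rfl (fun t ht => if_pos (Finset.mem_range.mp ht))]
          simp
        · apply Finset.sum_congr rfl
          intro t ht
          rw [if_neg (by have := (Finset.mem_Ico.mp ht).1; omega)]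
    _ ≤ (m : ℝ) + 2 := by
        have hgeo : ∑ t ∈ Finset.Ico m k, (k:ℝ) * (1/2) ^ t
            = (k:ℝ) * ((1/2:ℝ) ^ m * ∑ i ∈ Finset.range (k - m), (1/2:ℝ) ^ i) := by
          rw [← Finset.mul_sum, Finset.sum_Ico_eq_sum_range]
          congr 1
          rw [Finset.mul_sum]
          apply Finset.sum_congr rfl
          intro i _
          rw [← pow_add]
        rw [hgeo]
        have h1 : ∑ i ∈ Finset.range (k - m), (1/2:ℝ) ^ i ≤ 2 := by
          rw [geom_sum_eq (by norm_num)]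
          have h0 : (0:ℝ) ≤ (1/2:ℝ) ^ (k - m) := by positivity
          have he : ((1/2:ℝ) ^ (k - m) - 1) / ((1/2:ℝ) - 1) = 2 * (1 - (1/2:ℝ) ^ (k - m)) := by
            ring
          rw [he]
          linarith
        have h2 : (k:ℝ) * (1/2:ℝ) ^ m ≤ 1 := by
          have hkm : k < 2 ^ m := Nat.lt_pow_succ_log_self (by norm_num) k
          have hkm' : (k:ℝ) ≤ 2 ^ m := by exact_mod_cast hkm.le
          rw [one_div, inv_pow, mul_inv_le_iff₀ (by positivity), one_mul]
          exact hkm'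
        have hsnn : (0:ℝ) ≤ ∑ i ∈ Finset.range (k - m), (1/2:ℝ) ^ i := by
          apply Finset.sum_nonneg
          intro i _
          positivity
        have hfin : (k:ℝ) * ((1/2:ℝ) ^ m * ∑ i ∈ Finset.range (k - m), (1/2:ℝ) ^ i) ≤ 2 := by
          calc (k:ℝ) * ((1/2:ℝ) ^ m * ∑ i ∈ Finset.range (k - m), (1/2:ℝ) ^ i)
              = ((k:ℝ) * (1/2:ℝ) ^ m) * ∑ i ∈ Finset.range (k - m), (1/2:ℝ) ^ i := by ring
            _ ≤ 1 * 2 := mul_le_mul h2 h1 hsnn (by norm_num)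
            _ = 2 := by norm_num
        linarith
    _ = (Nat.log 2 k : ℝ) + 3 := by
        rw [hm]
        push_cast
        ring

lemma numeric_final {k : ℕ} (hk3 : 3 ≤ k) :
    (Nat.log 2 k : ℝ) + 4 ≤ 5 * Real.log k := by
  rcases Nat.lt_or_ge k 4 with h4 | h4
  · have hk3' : k = 3 := by omega
    subst hk3'
    have hlog : Nat.log 2 3 = 1 := by
      rw [Nat.log_eq_of_pow_le_of_lt_pow] <;> norm_num
    rw [hlog]
    have h1 : (1:ℝ) < Real.log 3 := by
      rw [Real.lt_log_iff_exp_lt (by norm_num)]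
      calc Real.exp 1 < 2.7182818286 := Real.exp_one_lt_d9
        _ < 3 := by norm_num
    push_cast
    linarith
  · have hk0 : (0:ℝ) < k := by positivity
    have hL : (Nat.log 2 k : ℝ) * Real.log 2 ≤ Real.log k := by
      have h1 : (2:ℝ) ^ (Nat.log 2 k) ≤ (k:ℝ) := by
        exact_mod_cast Nat.pow_log_le_self 2 (by omega)
      calc (Nat.log 2 k : ℝ) * Real.log 2 = Real.log ((2:ℝ) ^ (Nat.log 2 k)) :=
            (Real.log_pow _ _).symm
        _ ≤ Real.log k := Real.log_le_log (by positivity) h1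
    have h2 : (0.6931471803:ℝ) < Real.log 2 := Real.log_two_gt_d9
    have h4' : Real.log 4 ≤ Real.log k := by
      apply Real.log_le_log (by norm_num)
      exact_mod_cast h4
    have h4e : Real.log 4 = 2 * Real.log 2 := by
      rw [show (4:ℝ) = 2 ^ 2 by norm_num, Real.log_pow]
      push_cast
      ring
    rw [h4e] at h4'
    nlinarith [hL, h4', h2]

end APGrid

/-- on the asymmetric grid instance with `k ≥ 3`, the expected cost of an
optimal a posteriori tour is at most `5·k·ln k`. -/
theorem statement5 (k : ℕ) (hk : 3 ≤ k) :
    apExpect (fun _ : Fin k × Fin k => 1 / (k : ℝ)) (fun A => TSP (gridCost k) A) ≤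
      5 * (k : ℝ) * Real.log k := by
  classical
  have hk0 : 0 < k := by omega
  have hexp : apExpect (fun _ : Fin k × Fin k => 1 / (k : ℝ)) (fun A => TSP (gridCost k) A)
      = ∑ A : Finset (APGrid.Vk k), APGrid.wgt k A * TSP (gridCost k) A := by
    apply Finset.sum_congr rfl
    intro A _
    rfl
  rw [hexp]
  have h1 : ∑ A : Finset (APGrid.Vk k), APGrid.wgt k A * TSP (gridCost k) A
      ≤ ∑ A : Finset (APGrid.Vk k), APGrid.wgt k A * ((k:ℝ) * (APGrid.Mx k A + 1)) := by
    apply Finset.sum_le_sum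
    intro A _
    exact mul_le_mul_of_nonneg_left (APGrid.TSP_le_Mx hk0 A) (APGrid.wgt_nonneg hk0 A)
  have h2 : ∑ A : Finset (APGrid.Vk k), APGrid.wgt k A * ((k:ℝ) * (APGrid.Mx k A + 1))
      = (k:ℝ) * (∑ A : Finset (APGrid.Vk k), APGrid.wgt k A * (APGrid.Mx k A : ℝ))
        + (k:ℝ) * (∑ A : Finset (APGrid.Vk k), APGrid.wgt k A) := by
    rw [Finset.mul_sum, Finset.mul_sum, ← Finset.sum_add_distrib]
    apply Finset.sum_congr rfl
    intro A _
    ring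
  have h3 := APGrid.EM_le hk
  have h4 := APGrid.sum_wgt_one k
  have h5 := APGrid.numeric_final hk
  calc ∑ A : Finset (APGrid.Vk k), APGrid.wgt k A * TSP (gridCost k) A
      ≤ (k:ℝ) * (∑ A : Finset (APGrid.Vk k), APGrid.wgt k A * (APGrid.Mx k A : ℝ))
        + (k:ℝ) * (∑ A : Finset (APGrid.Vk k), APGrid.wgt k A) := by rw [← h2]; exact h1
    _ ≤ (k:ℝ) * ((Nat.log 2 k : ℝ) + 3) + (k:ℝ) * 1 := by
        have hknn : (0:ℝ) ≤ k := by positivity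
        exact add_le_add (mul_le_mul_of_nonneg_left h3 hknn)
          (mul_le_mul_of_nonneg_left h4.le hknn)
    _ = (k:ℝ) * ((Nat.log 2 k : ℝ) + 4) := by ring
    _ ≤ (k:ℝ) * (5 * Real.log k) := by
        apply mul_le_mul_of_nonneg_left h5 (by positivity)
    _ = 5 * (k : ℝ) * Real.log k := by ring

end
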